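/- If p is a univariate real polynomial of degree at most M, then its derivative satisfies the Markov inequality: sup_{x ∈ [-1,1]} |p'(x)| ≤ M² · sup_{x ∈ [-1,1]} |p(x)|. -/

import Mathlib

set_option maxHeartbeats 2000000

open Polynomial Real Set Filter

namespace MarkovAux



lemma natDegree_T_le : ∀ n : ℕ, (Polynomial.Chebyshev.T ℝ (n : ℤ)).natDegree ≤ n := by
  intro n
  induction n using Nat.strong_induction_on with
  | _ n ih =>
    match n with
    | 0 => simp
    | 1 => simp
    | (k+2) =>
      rw [show ((k+2 : ℕ) : ℤ) = (k : ℤ) + 2 by push_cast; ring, Polynomial.Chebyshev.T_add_two]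
      refine le_trans (Polynomial.natDegree_sub_le _ _) ?_
      have h1 : (2 * X * Polynomial.Chebyshev.T ℝ ((k:ℤ) + 1)).natDegree ≤ k + 2 := by
        refine le_trans (Polynomial.natDegree_mul_le) ?_
        have := ih (k+1) (by omega)
        have h2 : (2 * X : ℝ[X]).natDegree ≤ 1 :=
          le_trans Polynomial.natDegree_mul_le (by simp)
        push_cast at this ⊢
        omega
      have h3 := ih k (by omega)
      simp only [sup_le_iff]
      exact ⟨h1, by omega⟩

lemma natDegree_U_le : ∀ n : ℕ, (Polynomial.Chebyshev.U ℝ (n : ℤ)).natDegree ≤ n := by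
  intro n
  induction n using Nat.strong_induction_on with
  | _ n ih =>
    match n with
    | 0 => simp
    | 1 => simp [Polynomial.Chebyshev.U_one]
      -- U 1 = 2X
    | (k+2) =>
      rw [show ((k+2 : ℕ) : ℤ) = (k : ℤ) + 2 by push_cast; ring, Polynomial.Chebyshev.U_add_two]
      refine le_trans (Polynomial.natDegree_sub_le _ _) ?_
      have h1 : (2 * X * Polynomial.Chebyshev.U ℝ ((k:ℤ) + 1)).natDegree ≤ k + 2 := by
        refine le_trans (Polynomial.natDegree_mul_le) ?_
        have := ih (k+1) (by omega)
        have h2 : (2 * X : ℝ[X]).natDegree ≤ 1 :=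
          le_trans Polynomial.natDegree_mul_le (by simp)
        push_cast at this ⊢
        omega
      have h3 := ih k (by omega)
      simp only [sup_le_iff]
      exact ⟨h1, by omega⟩

lemma abs_sin_nat_mul_le (n : ℕ) (θ : ℝ) : |sin ((n : ℝ) * θ)| ≤ (n : ℝ) * |sin θ| := by
  induction n with
  | zero => simp
  | succ k ih =>
    have : ((k+1 : ℕ) : ℝ) * θ = (k : ℝ) * θ + θ := by push_cast; ring
    rw [this, Real.sin_add]
    calc |sin ((k:ℝ)*θ) * cos θ + cos ((k:ℝ)*θ) * sin θ|
        ≤ |sin ((k:ℝ)*θ) * cos θ| + |cos ((k:ℝ)*θ) * sin θ| := abs_add_le _ _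
      _ ≤ |sin ((k:ℝ)*θ)| * 1 + 1 * |sin θ| := by
          rw [abs_mul, abs_mul]
          gcongr
          · exact Real.abs_cos_le_one θ
          · exact Real.abs_cos_le_one _
      _ ≤ (k:ℝ) * |sin θ| + 1 * |sin θ| := by
          rw [mul_one]
          gcongr
      _ = ((k+1 : ℕ) : ℝ) * |sin θ| := by push_cast; ring



lemma sin_lb (M : ℕ) (hM : 1 ≤ M) : 1 / (M : ℝ) ≤ sin (π / (2 * M)) := by
  have hMpos : (0:ℝ) < M := by exact_mod_cast hM
  rcases eq_or_lt_of_le hM with h1 | h2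
  · rw [← h1]
    norm_num
  · have hM2 : (2:ℝ) ≤ M := by exact_mod_cast h2
    set x : ℝ := π / (2 * M) with hx
    have hπ1 : 3.141592 < π := Real.pi_gt_d6
    have hπ2 : π < 3.141593 := by
      have := Real.pi_lt_d6
      linarith
    have hx0 : 0 < x := by positivity
    have hx1 : x ≤ 1 := by
      rw [hx, div_le_one (by positivity)]
      nlinarith
    have h : x - x ^ 3 / 4 < sin x := by
      have := Real.sin_gt_sub_cube hx0
      nlinarith [pow_pos hx0 3]
    have hkey : 1 / (M:ℝ) ≤ x - x ^ 3 / 4 := by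
      have hxval : x * (2 * M) = π := by rw [hx]; field_simp
      have hxle : x ≤ π / 4 := by
        rw [hx]
        gcongr
        nlinarith
      have h1M : 1 / (M:ℝ) = x * (2 / π) := by
        rw [hx]; field_simp
      rw [h1M]
      have : 2 / π ≤ 1 - x^2/4 := by
        have : x^2 ≤ (π/4)^2 := by nlinarith
        rw [div_le_iff₀ (by positivity)]
        nlinarith
      nlinarith
    linarith


lemma eq_of_cos_sin_eq {t0 θ θ' : ℝ} (h1 : θ ∈ Ico t0 (t0 + 2*π)) (h2 : θ' ∈ Ico t0 (t0 + 2*π))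
    (hc : cos θ = cos θ') (hs : sin θ = sin θ') : θ = θ' := by
  have hexp : Complex.exp (θ * Complex.I) = Complex.exp (θ' * Complex.I) := by
    rw [Complex.exp_mul_I, Complex.exp_mul_I, ← Complex.ofReal_cos, ← Complex.ofReal_cos,
      ← Complex.ofReal_sin, ← Complex.ofReal_sin, hc, hs]
  obtain ⟨n, hn⟩ := Complex.exp_eq_exp_iff_exists_int.mp hexp
  have hz : ((θ - θ' - n * (2 * π) : ℝ) : ℂ) * Complex.I = 0 := by
    push_cast
    linear_combination hn
  have hz2 : ((θ - θ' - n * (2 * π) : ℝ) : ℂ) = 0 :=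
    (mul_eq_zero.mp hz).resolve_right Complex.I_ne_zero
  have hr : θ - θ' - n * (2*π) = 0 := by exact_mod_cast hz2
  have hπ := Real.pi_pos
  obtain ⟨hl1, hr1⟩ := h1
  obtain ⟨hl2, hr2⟩ := h2
  have hn0 : n = 0 := by
    rcases lt_trichotomy n 0 with h | h | h
    · have : (n : ℝ) ≤ -1 := by exact_mod_cast Int.le_sub_one_of_lt h
      nlinarith
    · exact h
    · have : (1:ℝ) ≤ n := by exact_mod_cast h
      nlinarith
  rw [hn0] at hr
  push_cast at hr
  linarith

lemma exists_pts_of_deriv_neg {g : ℝ → ℝ} {θ0 L : ℝ} (h : HasDerivAt g L θ0) (hL : L < 0)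
    (h0 : g θ0 = 0) {l r : ℝ} (hl : l < θ0) (hr : θ0 < r) :
    (∃ v ∈ Ioo l θ0, 0 < g v) ∧ (∃ u ∈ Ioo θ0 r, g u < 0) := by
  have hslope := hasDerivAt_iff_tendsto_slope.mp h
  have hev : ∀ᶠ x in nhdsWithin θ0 {θ0}ᶜ, slope g θ0 x < 0 := hslope.eventually_lt_const hL
  constructor
  · have hev2 : ∀ᶠ x in nhdsWithin θ0 (Iio θ0), slope g θ0 x < 0 :=
      hev.filter_mono (nhdsWithin_mono _ (fun x hx => ne_of_lt hx))
    have hev3 : ∀ᶠ x in nhdsWithin θ0 (Iio θ0), x ∈ Ioo l θ0 :=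
      Ioo_mem_nhdsLT_of_mem ⟨hl, le_refl θ0⟩
    obtain ⟨v, hv1, hv2⟩ := (hev2.and hev3).exists
    refine ⟨v, hv2, ?_⟩
    have hsl : slope g θ0 v = g v / (v - θ0) := by
      rw [slope_def_field, h0, sub_zero]
    rw [hsl] at hv1
    have hvlt : v - θ0 < 0 := sub_neg.mpr hv2.2
    rcases div_neg_iff.mp hv1 with ⟨hp, _⟩ | ⟨_, hn⟩
    · exact hp
    · linarith
  · have hev2 : ∀ᶠ x in nhdsWithin θ0 (Ioi θ0), slope g θ0 x < 0 :=
      hev.filter_mono (nhdsWithin_mono _ (fun x hx => ne_of_gt hx))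
    have hev3 : ∀ᶠ x in nhdsWithin θ0 (Ioi θ0), x ∈ Ioo θ0 r :=
      Ioo_mem_nhdsGT_of_mem ⟨le_refl θ0, hr⟩
    obtain ⟨u, hu1, hu2⟩ := (hev2.and hev3).exists
    refine ⟨u, hu2, ?_⟩
    have hsl : slope g θ0 u = g u / (u - θ0) := by
      rw [slope_def_field, h0, sub_zero]
    rw [hsl] at hu1
    have hult : 0 < u - θ0 := sub_pos.mpr hu2.1
    rcases div_neg_iff.mp hu1 with ⟨_, hn⟩ | ⟨hp, _⟩
    · linarith
    · exact hp


lemma count_lemma (M : ℕ) (a b : ℝ[X]) (ha : a.natDegree ≤ M) (hb : b.natDegree + 1 ≤ M)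
    (t0 : ℝ) (S : Finset ℝ)
    (hz : ∀ θ ∈ S, a.eval (cos θ) + sin θ * b.eval (cos θ) = 0)
    (hsub : ∀ θ ∈ S, θ ∈ Set.Ico t0 (t0 + 2 * π))
    (hcard : 2 * M + 1 ≤ S.card) : a = 0 ∧ b = 0 := by
  classical
  set N : ℝ[X] := a ^ 2 - (1 - X ^ 2) * b ^ 2 with hN
  have hX2 : ((1 : ℝ[X]) - X ^ 2) ≠ 0 := by
    intro h
    have := congrArg (Polynomial.eval 0) h
    simp at this
  have hdegN : N.natDegree ≤ 2 * M := by
    refine le_trans (Polynomial.natDegree_sub_le _ _) ?_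
    have h1 : (a ^ 2).natDegree ≤ 2 * M := by
      rw [Polynomial.natDegree_pow]; omega
    have h2 : ((1 - X ^ 2) * b ^ 2 : ℝ[X]).natDegree ≤ 2 * M := by
      refine le_trans Polynomial.natDegree_mul_le ?_
      have h3 : ((1 : ℝ[X]) - X ^ 2).natDegree ≤ 2 := by
        refine le_trans (Polynomial.natDegree_sub_le _ _) ?_
        simp [Polynomial.natDegree_one, Polynomial.natDegree_pow]
      rw [Polynomial.natDegree_pow]
      omega
    omega
  by_cases hN0 : N = 0
  · have heq : a ^ 2 = (1 - X ^ 2) * b ^ 2 := by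
      have := sub_eq_zero.mp hN0
      exact this
    by_cases hb0 : b = 0
    · refine ⟨?_, hb0⟩
      have : a ^ 2 = 0 := by rw [heq, hb0]; ring
      exact pow_eq_zero_iff (by norm_num) |>.mp this
    · exfalso
      have ha0 : a ≠ 0 := by
        intro h
        rw [h] at heq
        have : ((1:ℝ[X]) - X ^ 2) * b ^ 2 ≠ 0 := mul_ne_zero hX2 (pow_ne_zero _ hb0)
        exact this (by rw [← heq]; ring)
      have h1X : ((1:ℝ[X]) - X) ≠ 0 := by
        intro h
        have := congrArg (Polynomial.eval 0) h
        simp at this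
      have h1X' : ((1:ℝ[X]) + X) ≠ 0 := by
        intro h
        have := congrArg (Polynomial.eval 0) h
        simp at this
      have heq2 : a * a = (1 - X) * ((1 + X) * (b * b)) := by
        rw [← sq, heq]; ring
      have hne : ((1:ℝ[X]) - X) * ((1 + X) * (b * b)) ≠ 0 :=
        mul_ne_zero h1X (mul_ne_zero h1X' (mul_ne_zero hb0 hb0))
      have hrma : rootMultiplicity 1 (a * a) = 2 * rootMultiplicity 1 a := by
        rw [Polynomial.rootMultiplicity_mul (mul_ne_zero ha0 ha0)]; ring
      have hrm1X : rootMultiplicity 1 ((1:ℝ[X]) - X) = 1 := by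
        have hle : rootMultiplicity 1 ((1:ℝ[X]) - X) ≤ 1 := by
          have hd := Polynomial.pow_rootMultiplicity_dvd ((1:ℝ[X]) - X) 1
          have := Polynomial.natDegree_le_of_dvd hd h1X
          rw [Polynomial.natDegree_pow, Polynomial.natDegree_X_sub_C] at this
          have hdeg : ((1:ℝ[X]) - X).natDegree ≤ 1 := by
            refine le_trans (Polynomial.natDegree_sub_le _ _) ?_
            simp
          omega
        have hge : 1 ≤ rootMultiplicity 1 ((1:ℝ[X]) - X) :=
          (Polynomial.rootMultiplicity_pos h1X).mpr (by simp [Polynomial.IsRoot])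
        omega
      have hrm1X' : rootMultiplicity 1 ((1:ℝ[X]) + X) = 0 := by
        apply Polynomial.rootMultiplicity_eq_zero
        simp [Polynomial.IsRoot]
      have := congrArg (rootMultiplicity 1) heq2
      rw [hrma, Polynomial.rootMultiplicity_mul hne,
        Polynomial.rootMultiplicity_mul (mul_ne_zero h1X' (mul_ne_zero hb0 hb0)),
        Polynomial.rootMultiplicity_mul (mul_ne_zero hb0 hb0), hrm1X, hrm1X'] at this
      omega
  · exfalso
    have hroot : ∀ θ ∈ S, N.eval (cos θ) = 0 := by
      intro θ hθ
      have h := hz θ hθ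
      have hsin : sin θ ^ 2 = 1 - cos θ ^ 2 := Real.sin_sq θ
      simp only [hN, Polynomial.eval_sub, Polynomial.eval_mul, Polynomial.eval_pow,
        Polynomial.eval_one, Polynomial.eval_X]
      linear_combination (a.eval (cos θ) - sin θ * b.eval (cos θ)) * h
        + (b.eval (cos θ))^2 * hsin
    -- pairwise fact
    have hpair : ∀ θ ∈ S, ∀ θ' ∈ S, θ ≠ θ' → cos θ = cos θ' →
        sin θ' = -sin θ ∧ sin θ ≠ 0 := by
      intro θ hθ θ' hθ' hne hcc
      have hsq : sin θ' ^ 2 = sin θ ^ 2 := by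
        rw [Real.sin_sq, Real.sin_sq, hcc]
      have hor := sq_eq_sq_iff_eq_or_eq_neg.mp hsq
      have hss : sin θ' = -sin θ := by
        rcases hor with h | h
        · exact absurd (eq_of_cos_sin_eq (hsub θ hθ) (hsub θ' hθ') hcc h.symm) hne
        · exact h
      refine ⟨hss, fun h0 => ?_⟩
      rw [h0] at hss
      simp at hss
      exact hne (eq_of_cos_sin_eq (hsub θ hθ) (hsub θ' hθ') hcc (by rw [h0, hss]))
    set T := S.image cos with hT
    have key : ∀ x ∈ T, (S.filter fun θ => cos θ = x).card ≤ N.rootMultiplicity x := by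
      intro x hx
      obtain ⟨θx, hθx, hθxe⟩ := Finset.mem_image.mp hx
      have hrm1 : 1 ≤ N.rootMultiplicity x := by
        rw [Nat.one_le_iff_ne_zero, ← Nat.pos_iff_ne_zero, Polynomial.rootMultiplicity_pos hN0]
        rw [Polynomial.IsRoot, ← hθxe]
        exact hroot θx hθx
      by_cases hF : 2 ≤ (S.filter fun θ => cos θ = x).card
      · -- two distinct elements
        obtain ⟨θ, hθ, θ', hθ', hne⟩ := Finset.one_lt_card.mp hF
        obtain ⟨hθS, hθc⟩ := Finset.mem_filter.mp hθ
        obtain ⟨hθS', hθc'⟩ := Finset.mem_filter.mp hθ'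
        have hcc : cos θ = cos θ' := by rw [hθc, hθc']
        obtain ⟨hss, hs0⟩ := hpair θ hθS θ' hθS' hne hcc
        have hab : a.eval x = 0 ∧ b.eval x = 0 := by
          have e1 := hz θ hθS
          have e2 := hz θ' hθS'
          rw [hθc] at e1
          rw [hθc'] at e2
          rw [hss] at e2
          constructor
          · linarith
          · have : sin θ * b.eval x = 0 := by linarith
            rcases mul_eq_zero.mp this with h | h
            · exact absurd h hs0
            · exact h
        have hdvd : ((X : ℝ[X]) - C x) ^ 2 ∣ N := by
          have hda : ((X : ℝ[X]) - C x) ∣ a := Polynomial.dvd_iff_isRoot.mpr hab.1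
          have hdb : ((X : ℝ[X]) - C x) ∣ b := Polynomial.dvd_iff_isRoot.mpr hab.2
          have h1 : ((X : ℝ[X]) - C x) ^ 2 ∣ a ^ 2 := pow_dvd_pow_of_dvd hda 2
          have h2 : ((X : ℝ[X]) - C x) ^ 2 ∣ (1 - X ^ 2) * b ^ 2 :=
            Dvd.dvd.mul_left (pow_dvd_pow_of_dvd hdb 2) _
          exact dvd_sub h1 h2
        have hrm2 : 2 ≤ N.rootMultiplicity x := (Polynomial.le_rootMultiplicity_iff hN0).mpr hdvd
        -- card ≤ 2
        have hcle : (S.filter fun θ => cos θ = x).card ≤ 2 := by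
          by_contra hc
          push_neg at hc
          obtain ⟨θ1, h1, θ2, h2, θ3, h3, h12, h13, h23⟩ := Finset.two_lt_card.mp hc
          obtain ⟨h1S, h1c⟩ := Finset.mem_filter.mp h1
          obtain ⟨h2S, h2c⟩ := Finset.mem_filter.mp h2
          obtain ⟨h3S, h3c⟩ := Finset.mem_filter.mp h3
          obtain ⟨e12, n1⟩ := hpair θ1 h1S θ2 h2S h12 (by rw [h1c, h2c])
          obtain ⟨e13, _⟩ := hpair θ1 h1S θ3 h3S h13 (by rw [h1c, h3c])
          obtain ⟨e23, n2⟩ := hpair θ2 h2S θ3 h3S h23 (by rw [h2c, h3c])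
          rw [e12] at e23 n2
          rw [e13] at e23
          simp at e23
          exact n1 (by linarith)
        omega
      · omega
    have h1 : S.card = ∑ x ∈ T, (S.filter fun θ => cos θ = x).card :=
      Finset.card_eq_sum_card_fiberwise (fun θ hθ => Finset.mem_image_of_mem _ hθ)
    have h2 : ∑ x ∈ T, (S.filter fun θ => cos θ = x).card ≤ ∑ x ∈ T, N.rootMultiplicity x :=
      Finset.sum_le_sum key
    have hTsub : T ⊆ N.roots.toFinset := by
      intro x hx
      obtain ⟨θx, hθx, hθxe⟩ := Finset.mem_image.mp hx
      rw [Multiset.mem_toFinset, Polynomial.mem_roots hN0]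
      rw [Polynomial.IsRoot, ← hθxe]
      exact hroot θx hθx
    have h3 : ∑ x ∈ T, N.rootMultiplicity x ≤ ∑ x ∈ N.roots.toFinset, N.rootMultiplicity x :=
      Finset.sum_le_sum_of_subset_of_nonneg hTsub (by intros; exact Nat.zero_le _)
    have h4 : ∑ x ∈ N.roots.toFinset, N.rootMultiplicity x = Multiset.card N.roots := by
      rw [← Multiset.toFinset_sum_count_eq N.roots]
      exact Finset.sum_congr rfl (fun x _ => (Polynomial.count_roots N).symm)
    have h5 := Polynomial.card_roots' N
    omega


lemma alt_lemma (M : ℕ) (hM : 1 ≤ M) (a b : ℝ[X]) (ha : a.natDegree ≤ M) (hb : b.natDegree + 1 ≤ M)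
    (g : ℝ → ℝ) (hg : ∀ θ, g θ = a.eval (cos θ) + sin θ * b.eval (cos θ))
    (e : ℕ → ℝ) (he : ∀ k, e k = e 0 + k * (π / M))
    (hsign : ∀ k, k ≤ 2 * M → 0 < (-1 : ℝ) ^ k * g (e k))
    (x1 x2 x3 : ℝ) (hx01 : e 0 < x1) (hx12 : x1 < x2) (hx23 : x2 < x3) (hx3 : x3 < e 1)
    (hz1 : g x1 = 0) (hz2 : g x2 = 0) (hz3 : g x3 = 0) : False := by
  classical
  have hMpos : (0:ℝ) < M := by exact_mod_cast hM
  have hπ := Real.pi_pos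
  have hcont : Continuous g := by
    have : g = fun θ => a.eval (cos θ) + sin θ * b.eval (cos θ) := funext hg
    rw [this]
    exact ((a.continuous_aeval).comp Real.continuous_cos).add
      (Real.continuous_sin.mul ((b.continuous_aeval).comp Real.continuous_cos))
  have hmono : ∀ j k : ℕ, j ≤ k → e j ≤ e k := by
    intro j k hjk
    rw [he j, he k]
    have : (j:ℝ) ≤ k := by exact_mod_cast hjk
    have hp : (0:ℝ) < π / M := by positivity
    nlinarith
  have hstep : ∀ k : ℕ, e k < e (k+1) := by
    intro k
    rw [he k, he (k+1)]
    have hp : (0:ℝ) < π / M := by positivity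
    push_cast
    nlinarith
  have hwrap : e (2*M) = e 0 + 2 * π := by
    rw [he (2*M)]
    push_cast
    field_simp
  have hzex : ∀ k : ℕ, ∃ z, (1 ≤ k ∧ k + 1 ≤ 2*M) → (z ∈ Ioo (e k) (e (k+1)) ∧ g z = 0) := by
    intro k
    by_cases hk : 1 ≤ k ∧ k + 1 ≤ 2*M
    · obtain ⟨hk1, hk2⟩ := hk
      have hs1 := hsign k (by omega)
      have hs2 := hsign (k+1) (by omega)
      rcases Nat.even_or_odd k with hev | hod
      · rw [hev.neg_one_pow, one_mul] at hs1
        have : Odd (k+1) := Even.add_one hev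
        rw [this.neg_one_pow, neg_one_mul, neg_pos] at hs2
        have := intermediate_value_Ioo' (le_of_lt (hstep k)) hcont.continuousOn
          (show (0:ℝ) ∈ Ioo (g (e (k+1))) (g (e k)) from ⟨hs2, hs1⟩)
        obtain ⟨z, hz, hz0⟩ := this
        exact ⟨z, fun _ => ⟨hz, hz0⟩⟩
      · rw [hod.neg_one_pow, neg_one_mul, neg_pos] at hs1
        have : Even (k+1) := Odd.add_one hod
        rw [this.neg_one_pow, one_mul] at hs2
        have := intermediate_value_Ioo (le_of_lt (hstep k)) hcont.continuousOn
          (show (0:ℝ) ∈ Ioo (g (e k)) (g (e (k+1))) from ⟨hs1, hs2⟩)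
        obtain ⟨z, hz, hz0⟩ := this
        exact ⟨z, fun _ => ⟨hz, hz0⟩⟩
    · exact ⟨0, fun h => absurd h hk⟩
  choose z hzp using hzex
  set S : Finset ℝ := ({x1, x2, x3} : Finset ℝ) ∪ (Finset.Ico 1 (2*M)).image z with hS
  have hzmem : ∀ k ∈ Finset.Ico 1 (2*M), z k ∈ Ioo (e k) (e (k+1)) ∧ g (z k) = 0 := by
    intro k hk
    rw [Finset.mem_Ico] at hk
    exact hzp k ⟨hk.1, by omega⟩
  have hinj : Set.InjOn z (Finset.Ico 1 (2*M)) := by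
    intro j hj k hk hjk
    by_contra hne
    rcases lt_or_gt_of_ne hne with h | h
    · have h1 := (hzmem j hj).1.2
      have h2 := (hzmem k hk).1.1
      have := hmono (j+1) k (by omega)
      linarith
    · have h1 := (hzmem k hk).1.2
      have h2 := (hzmem j hj).1.1
      have := hmono (k+1) j (by omega)
      linarith
  have hx3card : ({x1, x2, x3} : Finset ℝ).card = 3 := by
    rw [Finset.card_insert_of_notMem, Finset.card_insert_of_notMem, Finset.card_singleton]
    · simp only [Finset.mem_singleton]
      exact ne_of_lt hx23
    · simp only [Finset.mem_insert, Finset.mem_singleton]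
      push_neg
      exact ⟨ne_of_lt hx12, ne_of_lt (hx12.trans hx23)⟩
  have hdisj : Disjoint ({x1, x2, x3} : Finset ℝ) ((Finset.Ico 1 (2*M)).image z) := by
    rw [Finset.disjoint_left]
    intro t ht htim
    obtain ⟨k, hk, hkz⟩ := Finset.mem_image.mp htim
    have hzk := (hzmem k hk).1.1
    rw [Finset.mem_Ico] at hk
    have : e 1 ≤ e k := hmono 1 k hk.1
    have htlt : t < e 1 := by
      simp only [Finset.mem_insert, Finset.mem_singleton] at ht
      rcases ht with rfl | rfl | rfl
      · linarith
      · linarith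
      · exact hx3
    rw [hkz] at hzk
    linarith
  have hcard : S.card = 2 * M + 2 := by
    rw [hS, Finset.card_union_of_disjoint hdisj, hx3card,
      Finset.card_image_of_injOn hinj, Nat.card_Ico]
    omega
  have hzero : ∀ θ ∈ S, a.eval (cos θ) + sin θ * b.eval (cos θ) = 0 := by
    intro θ hθ
    rw [← hg θ]
    rw [hS, Finset.mem_union] at hθ
    rcases hθ with h | h
    · simp only [Finset.mem_insert, Finset.mem_singleton] at h
      rcases h with rfl | rfl | rfl
      · exact hz1
      · exact hz2
      · exact hz3
    · obtain ⟨k, hk, hkz⟩ := Finset.mem_image.mp h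
      rw [← hkz]
      exact (hzmem k hk).2
  have hsub : ∀ θ ∈ S, θ ∈ Set.Ico (e 0) (e 0 + 2*π) := by
    intro θ hθ
    rw [← hwrap]
    rw [hS, Finset.mem_union] at hθ
    have he1 : e 1 ≤ e (2*M) := hmono 1 (2*M) (by omega)
    rcases hθ with h | h
    · simp only [Finset.mem_insert, Finset.mem_singleton] at h
      rcases h with rfl | rfl | rfl
      · exact ⟨le_of_lt hx01, by linarith⟩
      · constructor <;> linarith
      · constructor <;> linarith
    · obtain ⟨k, hk, hkz⟩ := Finset.mem_image.mp h
      have hzk := (hzmem k hk).1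
      rw [Finset.mem_Ico] at hk
      have h1 : e 0 ≤ e k := hmono 0 k (by omega)
      have h2 : e (k+1) ≤ e (2*M) := hmono (k+1) (2*M) (by omega)
      rw [← hkz]
      exact ⟨by linarith [hzk.1], by linarith [hzk.2]⟩
  obtain ⟨ha0, hb0⟩ := count_lemma M a b ha hb (e 0) S hzero hsub (by omega)
  have := hsign 0 (by omega)
  rw [pow_zero, one_mul, hg (e 0), ha0, hb0] at this
  simp at this


lemma sin_shift (k : ℕ) : sin ((k : ℝ) * π - π/2) = -(-1:ℝ)^k := by
  induction k with
  | zero => simp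
  | succ n ih =>
    have : ((n+1 : ℕ) : ℝ) * π - π/2 = ((n:ℝ) * π - π/2) + π := by push_cast; ring
    rw [this, Real.sin_add_pi, ih]
    ring

lemma bernstein_one_sided (M : ℕ) (hM : 1 ≤ M) (p : ℝ[X]) (hp : p.natDegree ≤ M)
    (hb : ∀ x ∈ Icc (-1:ℝ) 1, |p.eval x| ≤ 1) :
    ∀ θ : ℝ, -(sin θ) * p.derivative.eval (cos θ) ≤ M := by
  by_contra hcon
  push_neg at hcon
  obtain ⟨θ0, hθ0⟩ := hcon
  have hMpos : (0:ℝ) < M := by exact_mod_cast hM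
  have hπ := Real.pi_pos
  set D : ℝ := -(sin θ0) * p.derivative.eval (cos θ0) with hD
  have hDM : (M:ℝ) < D := hθ0
  have hD0 : 0 < D := lt_trans hMpos hDM
  set s : ℝ → ℝ := fun θ => p.eval (cos θ) with hs
  have hsd : ∀ θ : ℝ, HasDerivAt s (-(sin θ) * p.derivative.eval (cos θ)) θ := by
    intro θ
    have h1 := p.hasDerivAt (cos θ)
    have h2 := Real.hasDerivAt_cos θ
    have := h1.comp θ h2
    show HasDerivAt (fun θ => p.eval (cos θ)) _ θ
    simpa [Function.comp_def, mul_comm] using this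
  have hsb : ∀ θ : ℝ, |s θ| ≤ 1 := by
    intro θ
    exact hb (cos θ) ⟨Real.neg_one_le_cos θ, Real.cos_le_one θ⟩
  set ρ : ℝ := (1 + D / M) / 2 with hρ
  have hρ1 : 1 < ρ := by
    rw [hρ]
    rw [lt_div_iff₀ (by norm_num : (0:ℝ) < 2)]
    have : 1 < D / M := (one_lt_div hMpos).mpr hDM
    linarith
  have hρD : (M:ℝ) * ρ < D := by
    have hρlt : ρ < D / M := by
      rw [hρ]
      have : 1 < D / M := (one_lt_div hMpos).mpr hDM
      linarith
    calc (M:ℝ) * ρ < (M:ℝ) * (D / M) := mul_lt_mul_of_pos_left hρlt hMpos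
      _ = D := by field_simp
  set s0 : ℝ := s θ0 with hs0
  have hs0b : |s0| ≤ 1 := hsb θ0
  have hratio : |s0 / ρ| ≤ 1 := by
    rw [abs_div, abs_of_pos (by linarith : (0:ℝ) < ρ)]
    rw [div_le_one (by linarith)]
    linarith [abs_nonneg s0]
  have hratio1 : -1 ≤ s0 / ρ := by have := abs_le.mp hratio; exact this.1
  have hratio2 : s0 / ρ ≤ 1 := by have := abs_le.mp hratio; exact this.2
  set β : ℝ := arcsin (s0 / ρ) with hβ
  have hsinβ : sin β = s0 / ρ := Real.sin_arcsin hratio1 hratio2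
  have hcosβ0 : 0 ≤ cos β := by rw [hβ, Real.cos_arcsin]; positivity
  have hcosβ1 : cos β ≤ 1 := Real.cos_le_one β
  have hβmem : -(π/2) ≤ β ∧ β ≤ π/2 := by
    constructor
    · exact Real.neg_pi_div_two_le_arcsin _
    · exact Real.arcsin_le_pi_div_two _
  set γ : ℝ := β - M * θ0 with hγ
  set g : ℝ → ℝ := fun θ => s θ - ρ * sin (M * θ + γ) with hg
  have hg0 : g θ0 = 0 := by
    rw [hg]
    simp only
    rw [hγ]
    have : (M:ℝ) * θ0 + (β - M * θ0) = β := by ring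
    rw [this, hsinβ]
    have hρ0 : ρ ≠ 0 := ne_of_gt (by linarith)
    rw [mul_div_cancel₀ _ hρ0, hs0]
    ring
  -- derivative of g at θ0
  have hgd : HasDerivAt g (D - ρ * (cos β * M)) θ0 := by
    have hinner : HasDerivAt (fun θ : ℝ => (M:ℝ) * θ + γ) (M:ℝ) θ0 := by
      simpa using ((hasDerivAt_id θ0).const_mul (M:ℝ)).add_const γ
    have hcc : HasDerivAt (fun θ : ℝ => sin ((M:ℝ) * θ + γ)) (cos ((M:ℝ) * θ0 + γ) * M) θ0 :=
      (Real.hasDerivAt_sin _).comp θ0 hinner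
    have hβeq : (M:ℝ) * θ0 + γ = β := by rw [hγ]; ring
    rw [hβeq] at hcc
    exact (hsd θ0).sub (hcc.const_mul ρ)
  have hL : D - ρ * (cos β * M) > 0 := by
    have h1 : cos β * M ≤ 1 * M := mul_le_mul_of_nonneg_right hcosβ1 (le_of_lt hMpos)
    have h2 : ρ * (cos β * M) ≤ ρ * (1 * M) :=
      mul_le_mul_of_nonneg_left h1 (by linarith)
    have h3 : ρ * (1 * M) = M * ρ := by ring
    linarith
  -- points e k
  set e : ℕ → ℝ := fun k => (-(π/2) + k * π - γ) / M with he
  have heprop : ∀ k : ℕ, e k = e 0 + k * (π / M) := by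
    intro k
    rw [he]
    simp only
    field_simp
    ring
  have hesign : ∀ k : ℕ, k ≤ 2*M → 0 < (-1:ℝ)^k * g (e k) := by
    intro k _
    have hval : (M:ℝ) * e k + γ = (k:ℝ) * π - π/2 := by
      rw [he]
      field_simp
      ring
    have : g (e k) = s (e k) + ρ * (-1:ℝ)^k := by
      rw [hg]
      simp only
      rw [hval, sin_shift k]
      ring
    rw [this]
    have h1 := hsb (e k)
    have h2 := abs_le.mp h1
    rcases Nat.even_or_odd k with hev | hod
    · rw [hev.neg_one_pow]
      have : (1:ℝ) * (s (e k) + ρ * 1) = s (e k) + ρ := by ring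
      nlinarith [h2.1]
    · rw [hod.neg_one_pow]
      nlinarith [h2.2]
  -- position of θ0
  have hθ0mem : e 0 < θ0 ∧ θ0 < e 1 := by
    have hβγ : (M:ℝ) * θ0 = β - γ := by rw [hγ]; ring
    constructor
    · rw [he]
      simp only
      rw [div_lt_iff₀ hMpos, Nat.cast_zero]
      have hb2 : -(π/2) < β := by
        rcases lt_or_eq_of_le hβmem.1 with h | h
        · exact h
        · exfalso
          have : sin β = -1 := by rw [← h]; simp
          rw [hsinβ] at this
          have : s0 = -ρ := by field_simp at this; linarith
          rw [this] at hs0b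
          rw [abs_neg, abs_of_pos (by linarith)] at hs0b
          linarith
      nlinarith [hb2]
    · rw [he]
      simp only
      rw [lt_div_iff₀ hMpos, Nat.cast_one]
      have hb2 : β < π/2 := by
        rcases lt_or_eq_of_le hβmem.2 with h | h
        · exact h
        · exfalso
          have : sin β = 1 := by rw [h]; simp
          rw [hsinβ] at this
          have : s0 = ρ := by field_simp at this; linarith
          rw [this] at hs0b
          rw [abs_of_pos (by linarith)] at hs0b
          linarith
      nlinarith [hb2]
  -- continuity of g
  have hgc : Continuous g := by
    rw [hg]
    exact ((p.continuous_aeval).comp Real.continuous_cos).sub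
      (continuous_const.mul (Real.continuous_sin.comp (by continuity)))
  -- points v u near θ0
  have hneg : HasDerivAt (fun θ => -(g θ)) (-(D - ρ * (cos β * M))) θ0 := hgd.neg
  obtain ⟨⟨v, hv, hvlt⟩, ⟨u, hu, hugt⟩⟩ :=
    exists_pts_of_deriv_neg hneg (by linarith) (by simp [hg0]) hθ0mem.1 hθ0mem.2
  have hgv : g v < 0 := by linarith
  have hgu : 0 < g u := by linarith
  have hge0 : 0 < g (e 0) := by
    have := hesign 0 (by omega)
    simpa using this
  have hge1 : g (e 1) < 0 := by
    have := hesign 1 (by omega)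
    simp [pow_one] at this
    linarith
  obtain ⟨x1, hx1mem, hx1z⟩ := intermediate_value_Ioo' (le_of_lt hv.1) hgc.continuousOn
    (show (0:ℝ) ∈ Ioo (g v) (g (e 0)) from ⟨hgv, hge0⟩)
  obtain ⟨x3, hx3mem, hx3z⟩ := intermediate_value_Ioo' (le_of_lt hu.2) hgc.continuousOn
    (show (0:ℝ) ∈ Ioo (g (e 1)) (g u) from ⟨hge1, hgu⟩)
  -- polynomial form
  set a : ℝ[X] := p - C (ρ * sin γ) * Polynomial.Chebyshev.T ℝ (M:ℤ) with ha
  set b : ℝ[X] := -(C (ρ * cos γ) * Polynomial.Chebyshev.U ℝ ((M:ℤ) - 1)) with hbb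
  have hform : ∀ θ : ℝ, g θ = a.eval (cos θ) + sin θ * b.eval (cos θ) := by
    intro θ
    rw [hg, ha, hbb]
    simp only [Polynomial.eval_sub, Polynomial.eval_mul, Polynomial.eval_C, Polynomial.eval_neg]
    rw [Polynomial.Chebyshev.T_real_cos]
    have hU := Polynomial.Chebyshev.U_real_cos θ ((M:ℤ) - 1)
    rw [show ((((M:ℤ) - 1 : ℤ) : ℝ) + 1) = (M:ℝ) by push_cast; ring] at hU
    have hU2 : (Polynomial.Chebyshev.U ℝ ((M:ℤ)-1)).eval (cos θ) * sin θ = sin ((M:ℝ) * θ) := hU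
    have hsin : sin ((M:ℝ) * θ + γ) = sin ((M:ℝ)*θ) * cos γ + cos ((M:ℝ)*θ) * sin γ :=
      Real.sin_add _ _
    have hTcast : cos (((M:ℤ):ℝ) * θ) = cos ((M:ℝ) * θ) := by push_cast; ring_nf
    rw [hTcast, hsin]
    simp only [hs]
    have hrw : sin θ * -(ρ * cos γ * (Polynomial.Chebyshev.U ℝ ((M:ℤ)-1)).eval (cos θ))
        = -(ρ * cos γ * sin ((M:ℝ)*θ)) := by
      rw [← hU2]; ring
    rw [hrw]
    ring
  have hadeg : a.natDegree ≤ M := by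
    rw [ha]
    refine le_trans (Polynomial.natDegree_sub_le _ _) ?_
    have h1 : (C (ρ * sin γ) * Polynomial.Chebyshev.T ℝ (M:ℤ)).natDegree ≤ M := by
      refine le_trans Polynomial.natDegree_mul_le ?_
      rw [Polynomial.natDegree_C]
      simpa using natDegree_T_le M
    omega
  have hbdeg : b.natDegree + 1 ≤ M := by
    rw [hbb, Polynomial.natDegree_neg]
    have h1 : (C (ρ * cos γ) * Polynomial.Chebyshev.U ℝ ((M:ℤ)-1)).natDegree ≤ M - 1 := by
      refine le_trans Polynomial.natDegree_mul_le ?_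
      have h2 := natDegree_U_le (M - 1)
      have hcast : ((M - 1 : ℕ) : ℤ) = (M:ℤ) - 1 := by omega
      rw [hcast] at h2
      rw [Polynomial.natDegree_C]
      omega
    omega
  exact alt_lemma M hM a b hadeg hbdeg g hform e heprop hesign
    x1 θ0 x3 hx1mem.1 (hx1mem.2.trans hv.2) (hu.1.trans hx3mem.1) hx3mem.2 hx1z hg0 hx3z


lemma bernstein_abs (M : ℕ) (hM : 1 ≤ M) (p : ℝ[X]) (hp : p.natDegree ≤ M)
    (hb : ∀ x ∈ Icc (-1:ℝ) 1, |p.eval x| ≤ 1) :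
    ∀ θ : ℝ, |sin θ * p.derivative.eval (cos θ)| ≤ M := by
  intro θ
  have h1 := bernstein_one_sided M hM p hp hb θ
  have h2 := bernstein_one_sided M hM p hp hb (-θ)
  rw [Real.sin_neg, Real.cos_neg, neg_neg] at h2
  rw [abs_le]
  constructor <;> nlinarith [h1, h2]



lemma schur (M : ℕ) (hM : 1 ≤ M) (p : ℝ[X]) (hp : p.natDegree ≤ M)
    (hb : ∀ x ∈ Icc (-1:ℝ) 1, |p.eval x| ≤ 1) :
    ∀ θ1 ∈ Ioo (0:ℝ) (π/(2*M)), |sin θ1 * p.derivative.eval (cos θ1)| ≤ M * sin ((M:ℝ)*θ1) := by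
  intro θ1 hθ1
  by_contra hgt
  push_neg at hgt
  have hMpos : (0:ℝ) < M := by exact_mod_cast hM
  have hπ := Real.pi_pos
  set φ : ℝ → ℝ := fun θ => sin θ * p.derivative.eval (cos θ) * (M:ℝ)⁻¹ with hφ
  have hφb : ∀ θ, |φ θ| ≤ 1 := by
    intro θ
    rw [hφ]
    simp only
    rw [abs_mul, abs_inv, abs_of_pos hMpos]
    calc |sin θ * p.derivative.eval (cos θ)| * (M:ℝ)⁻¹
        ≤ (M:ℝ) * (M:ℝ)⁻¹ := by
          apply mul_le_mul_of_nonneg_right (bernstein_abs M hM p hp hb θ) (by positivity)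
      _ = 1 := by field_simp
  have hφ1 : sin ((M:ℝ)*θ1) < |φ θ1| := by
    rw [hφ]
    simp only
    rw [abs_mul, abs_inv, abs_of_pos hMpos]
    have h := (lt_div_iff₀ hMpos).mpr (by linarith [hgt] :
      sin ((M:ℝ)*θ1) * M < |sin θ1 * p.derivative.eval (cos θ1)|)
    rw [div_eq_mul_inv] at h
    exact h
  have hsinnn : 0 ≤ sin ((M:ℝ)*θ1) := by
    apply Real.sin_nonneg_of_nonneg_of_le_pi
    · have := hθ1.1; positivity
    · have h2 := hθ1.2
      have : (M:ℝ) * θ1 ≤ (M:ℝ) * (π/(2*M)) := by nlinarith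
      have heq : (M:ℝ) * (π/(2*M)) = π/2 := by field_simp
      linarith
  have hφ10 : φ θ1 ≠ 0 := by
    intro h
    rw [h] at hφ1
    simp at hφ1
    linarith
  set lam : ℝ := sin ((M:ℝ)*θ1) / φ θ1 with hlam
  have hlamlt : |lam| < 1 := by
    rw [hlam, abs_div]
    rw [div_lt_one (abs_pos.mpr hφ10)]
    rw [abs_of_nonneg hsinnn]
    exact hφ1
  set g : ℝ → ℝ := fun θ => lam * φ θ - sin ((M:ℝ)*θ) with hg
  -- polynomial form
  set b : ℝ[X] := C (lam * (M:ℝ)⁻¹) * p.derivative - Polynomial.Chebyshev.U ℝ ((M:ℤ)-1) with hbb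
  have hform : ∀ θ : ℝ, g θ = (0:ℝ[X]).eval (cos θ) + sin θ * b.eval (cos θ) := by
    intro θ
    rw [hg, hbb]
    simp only [Polynomial.eval_zero, Polynomial.eval_sub, Polynomial.eval_mul, Polynomial.eval_C]
    have hU := Polynomial.Chebyshev.U_real_cos θ ((M:ℤ) - 1)
    rw [show ((((M:ℤ) - 1 : ℤ) : ℝ) + 1) = (M:ℝ) by push_cast; ring] at hU
    rw [hφ]
    simp only
    rw [← hU]
    ring
  have hbdeg : b.natDegree + 1 ≤ M := by
    have h1 : (C (lam * (M:ℝ)⁻¹) * p.derivative).natDegree ≤ M - 1 := by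
      refine le_trans Polynomial.natDegree_mul_le ?_
      rw [Polynomial.natDegree_C]
      have := Polynomial.natDegree_derivative_le p
      omega
    have h2 : (Polynomial.Chebyshev.U ℝ ((M:ℤ)-1)).natDegree ≤ M - 1 := by
      have h2 := natDegree_U_le (M - 1)
      have hcast : ((M - 1 : ℕ) : ℤ) = (M:ℤ) - 1 := by omega
      rw [hcast] at h2
      exact h2
    have := Polynomial.natDegree_sub_le (C (lam * (M:ℝ)⁻¹) * p.derivative)
      (Polynomial.Chebyshev.U ℝ ((M:ℤ)-1))
    rw [hbb]
    omega
  -- points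
  set e : ℕ → ℝ := fun k => -(π/(2*M)) + k * (π/M) with he
  have heprop : ∀ k : ℕ, e k = e 0 + k * (π / M) := by
    intro k
    rw [he]
    simp
  have hsign : ∀ k : ℕ, k ≤ 2*M → 0 < (-1:ℝ)^k * g (e k) := by
    intro k _
    have hval : (M:ℝ) * e k = (k:ℝ) * π - π/2 := by
      rw [he]
      simp only
      field_simp
      ring
    have hgk : g (e k) = lam * φ (e k) + (-1:ℝ)^k := by
      rw [hg]
      simp only
      rw [hval, sin_shift k]
      ring
    rw [hgk]
    have h1 : |lam * φ (e k)| < 1 := by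
      rw [abs_mul]
      calc |lam| * |φ (e k)| ≤ |lam| * 1 := by
            apply mul_le_mul_of_nonneg_left (hφb (e k)) (abs_nonneg lam)
        _ < 1 := by rw [mul_one]; exact hlamlt
    have h2 := abs_lt.mp h1
    rcases Nat.even_or_odd k with hev | hod
    · rw [hev.neg_one_pow]
      nlinarith [h2.1]
    · rw [hod.neg_one_pow]
      nlinarith [h2.2]
  -- zeros
  have hφodd : φ (-θ1) = -φ θ1 := by
    rw [hφ]
    simp only [Real.sin_neg, Real.cos_neg]
    ring
  have hz2 : g 0 = 0 := by
    rw [hg]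
    simp [hφ]
  have hz3 : g θ1 = 0 := by
    rw [hg, hlam]
    simp only
    field_simp
    ring
  have hz1 : g (-θ1) = 0 := by
    rw [hg]
    simp only
    rw [hφodd]
    rw [hg] at hz3
    simp only at hz3
    have : sin ((M:ℝ) * -θ1) = -sin ((M:ℝ)*θ1) := by
      rw [show (M:ℝ) * -θ1 = -((M:ℝ)*θ1) by ring, Real.sin_neg]
    rw [this]
    linarith
  have he0 : e 0 = -(π/(2*M)) := by rw [he]; simp
  have he1 : e 1 = π/(2*M) := by
    rw [he]
    simp only [Nat.cast_one, one_mul]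
    field_simp
    ring
  exact alt_lemma M hM 0 b (by simp) hbdeg g hform e heprop hsign
    (-θ1) 0 θ1
    (by rw [he0]; linarith [hθ1.2]) (by linarith [hθ1.1]) hθ1.1 (by rw [he1]; exact hθ1.2)
    hz1 hz2 hz3


-- bound near the right endpoint, for cos (π/(2M)) < x ≤ 1
lemma upper_bound (M : ℕ) (hM : 1 ≤ M) (p : ℝ[X]) (hp : p.natDegree ≤ M)
    (hb : ∀ x ∈ Icc (-1:ℝ) 1, |p.eval x| ≤ 1) :
    ∀ x : ℝ, cos (π/(2*M)) < x → x ≤ 1 → |p.derivative.eval x| ≤ (M:ℝ)^2 := by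
  have hMpos : (0:ℝ) < M := by exact_mod_cast hM
  have hπ := Real.pi_pos
  have hc2 : π/(2*M) ≤ π/2 := by
    have hM1 : (1:ℝ) ≤ M := by exact_mod_cast hM
    have h2M : (2:ℝ) ≤ 2*M := by linarith
    exact div_le_div_of_nonneg_left (le_of_lt hπ) (by norm_num) h2M
  have hcpos : 0 < π/(2*M) := by positivity
  -- open case
  have hopen : ∀ x : ℝ, cos (π/(2*M)) < x → x < 1 → |p.derivative.eval x| ≤ (M:ℝ)^2 := by
    intro x hx1 hx2
    have hxlo : -1 < x := by
      have : (0:ℝ) ≤ cos (π/(2*M)) := Real.cos_nonneg_of_mem_Icc ⟨by linarith, hc2⟩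
      linarith
    set θ := arccos x with hθ
    have hcosθ : cos θ = x := Real.cos_arccos (le_of_lt hxlo) (le_of_lt hx2)
    have hθpos : 0 < θ := Real.arccos_pos.mpr hx2
    have hθlt : θ < π/(2*M) := by
      by_contra hcon
      push_neg at hcon
      have hmem1 : π/(2*M) ∈ Icc 0 π := ⟨le_of_lt hcpos, by linarith⟩
      have hmem2 : θ ∈ Icc 0 π := ⟨Real.arccos_nonneg x, Real.arccos_le_pi x⟩
      rcases eq_or_lt_of_le hcon with h | h
      · rw [h, hcosθ] at hx1
        exact lt_irrefl x hx1
      · have := Real.strictAntiOn_cos hmem1 hmem2 h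
        rw [hcosθ] at this
        linarith
    have hsinθpos : 0 < sin θ := Real.sin_pos_of_pos_of_lt_pi hθpos (by linarith)
    have hs := schur M hM p hp hb θ ⟨hθpos, hθlt⟩
    rw [hcosθ] at hs
    have hsin2 : sin ((M:ℝ)*θ) ≤ (M:ℝ) * sin θ := by
      have := abs_sin_nat_mul_le M θ
      rw [abs_of_pos hsinθpos] at this
      calc sin ((M:ℝ)*θ) ≤ |sin ((M:ℝ)*θ)| := le_abs_self _
        _ ≤ (M:ℝ) * sin θ := this
    have habs : |p.derivative.eval x| * sin θ ≤ (M:ℝ)^2 * sin θ := by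
      calc |p.derivative.eval x| * sin θ = |sin θ * p.derivative.eval x| := by
            rw [abs_mul, abs_of_pos hsinθpos]; ring
        _ ≤ (M:ℝ) * sin ((M:ℝ)*θ) := hs
        _ ≤ (M:ℝ) * ((M:ℝ) * sin θ) := by
            apply mul_le_mul_of_nonneg_left hsin2 (le_of_lt hMpos)
        _ = (M:ℝ)^2 * sin θ := by ring
    exact le_of_mul_le_mul_right habs hsinθpos
  -- closed case by continuity
  intro x hx1 hx2
  rcases lt_or_eq_of_le hx2 with h | h
  · exact hopen x hx1 h
  · subst h
    have hclt : cos (π/(2*M)) < 1 := by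
      rcases lt_or_eq_of_le (Real.cos_le_one (π/(2*M))) with h | h
      · exact h
      · exfalso
        have := Real.cos_eq_one_iff_of_lt_of_lt
          (show -(2*π) < π/(2*M) by linarith) (by nlinarith [hc2]) |>.mp h
        linarith
    have htend : Tendsto (fun y : ℝ => |p.derivative.eval y|) (nhdsWithin 1 (Iio 1))
        (nhds (|p.derivative.eval 1|)) := by
      apply Tendsto.mono_left _ nhdsWithin_le_nhds
      exact (continuous_abs.comp p.derivative.continuous_aeval).continuousAt
    have hev : ∀ᶠ y in nhdsWithin (1:ℝ) (Iio 1), |p.derivative.eval y| ≤ (M:ℝ)^2 := by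
      have hmem : Ioo (cos (π/(2*M))) 1 ∈ nhdsWithin (1:ℝ) (Iio 1) :=
        Ioo_mem_nhdsLT_of_mem ⟨hclt, le_refl 1⟩
      filter_upwards [hmem] with y hy
      exact hopen y hy.1 hy.2
    exact le_of_tendsto htend hev

lemma pointwise (M : ℕ) (hM : 1 ≤ M) (p : ℝ[X]) (hp : p.natDegree ≤ M)
    (hb : ∀ x ∈ Icc (-1:ℝ) 1, |p.eval x| ≤ 1) :
    ∀ x ∈ Icc (-1:ℝ) 1, |p.derivative.eval x| ≤ (M:ℝ)^2 := by
  have hMpos : (0:ℝ) < M := by exact_mod_cast hM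
  have hπ := Real.pi_pos
  intro x hx
  rcases le_or_gt x (cos (π/(2*M))) with hx1 | hx1
  · rcases le_or_gt (-(cos (π/(2*M)))) x with hx2 | hx2
    · -- central case
      set θ := arccos x with hθ
      have hcosθ : cos θ = x := Real.cos_arccos hx.1 hx.2
      have hsin : sin θ = Real.sqrt (1 - x^2) := by rw [hθ, Real.sin_arccos]
      have hsc : 0 ≤ sin (π/(2*M)) := by
        have := sin_lb M hM
        have : (0:ℝ) < 1/M := by positivity
        linarith [sin_lb M hM]
      have hsinge : sin (π/(2*M)) ≤ sin θ := by
        rw [hsin]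
        have h1 : sin (π/(2*M)) = Real.sqrt (1 - cos (π/(2*M))^2) := by
          rw [← Real.sin_sq (π/(2*M))]
          exact (Real.sqrt_sq hsc).symm
        rw [h1]
        apply Real.sqrt_le_sqrt
        have : x^2 ≤ cos (π/(2*M))^2 := sq_le_sq' hx2 hx1
        linarith
    -- |p' x| * sinθ ≤ M
      have hBer := bernstein_abs M hM p hp hb θ
      rw [hcosθ] at hBer
      have hsinpos : 0 < sin θ := by
        have h1 := sin_lb M hM
        have h2 : (0:ℝ) < 1/M := by positivity
        linarith
      have hfin : |p.derivative.eval x| * sin θ ≤ (M:ℝ)^2 * sin θ := by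
        calc |p.derivative.eval x| * sin θ = |sin θ * p.derivative.eval x| := by
              rw [abs_mul, abs_of_pos hsinpos]; ring
          _ ≤ (M:ℝ) := hBer
          _ = (M:ℝ)^2 * (1/M) := by field_simp
          _ ≤ (M:ℝ)^2 * sin (π/(2*M)) := by
              apply mul_le_mul_of_nonneg_left (sin_lb M hM) (by positivity)
          _ ≤ (M:ℝ)^2 * sin θ := by
              apply mul_le_mul_of_nonneg_left hsinge (by positivity)
      exact le_of_mul_le_mul_right hfin hsinpos
    · -- left case: use q = p ∘ (-X)
      set q : ℝ[X] := p.comp (-X) with hq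
      have hqdeg : q.natDegree ≤ M := by
        rw [hq]
        refine le_trans (Polynomial.natDegree_comp_le) ?_
        have : (-X : ℝ[X]).natDegree = 1 := by
          rw [Polynomial.natDegree_neg, Polynomial.natDegree_X]
        rw [this, mul_one]
        exact hp
      have hqb : ∀ y ∈ Icc (-1:ℝ) 1, |q.eval y| ≤ 1 := by
        intro y hy
        rw [hq, Polynomial.eval_comp]
        simp only [Polynomial.eval_neg, Polynomial.eval_X]
        exact hb (-y) ⟨by linarith [hy.2], by linarith [hy.1]⟩
      have hqd : ∀ y : ℝ, q.derivative.eval y = -(p.derivative.eval (-y)) := by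
        intro y
        rw [hq, Polynomial.derivative_comp]
        simp [Polynomial.eval_comp]
      have := upper_bound M hM q hqdeg hqb (-x) (by linarith) (by linarith [hx.1])
      rw [hqd (-x), neg_neg, abs_neg] at this
      exact this
  · exact upper_bound M hM p hp hb x hx1 hx.2

end MarkovAux

open MarkovAux in
theorem markov_inequality (M : ℕ) (p : Polynomial ℝ) (hp : p.natDegree ≤ M) :
    ⨆ x : Set.Icc (-1:ℝ) 1, |p.derivative.eval (x : ℝ)| ≤
      (M : ℝ)^2 * ⨆ x : Set.Icc (-1:ℝ) 1, |p.eval (x : ℝ)| := by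
  have hne : Nonempty (Set.Icc (-1:ℝ) 1) := Set.Nonempty.to_subtype (Set.nonempty_Icc.mpr (by norm_num))
  -- boundedness of both sups
  have hbddP : BddAbove (range fun x : Set.Icc (-1:ℝ) 1 => |p.eval (x:ℝ)|) := by
    have hc : Continuous fun x : Set.Icc (-1:ℝ) 1 => |p.eval (x:ℝ)| :=
      continuous_abs.comp (p.continuous_aeval.comp continuous_subtype_val)
    exact (isCompact_range hc).bddAbove
  have hΦ0 : 0 ≤ ⨆ x : Set.Icc (-1:ℝ) 1, |p.eval (x:ℝ)| := by
    refine le_trans (abs_nonneg (p.eval 0)) ?_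
    exact le_ciSup hbddP ⟨0, by norm_num, by norm_num⟩
  have heval : ∀ x : ℝ, ∀ hx : x ∈ Set.Icc (-1:ℝ) 1,
      |p.eval x| ≤ ⨆ x : Set.Icc (-1:ℝ) 1, |p.eval (x:ℝ)| := by
    intro x hx
    exact le_ciSup hbddP ⟨x, hx⟩
  set Φ := ⨆ x : Set.Icc (-1:ℝ) 1, |p.eval (x:ℝ)| with hΦ
  rcases Nat.eq_zero_or_pos M with hM0 | hM1
  · -- M = 0, p is constant
    subst hM0
    have hdeg : p.natDegree = 0 := le_antisymm hp (Nat.zero_le _)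
    obtain ⟨c, rfl⟩ : ∃ c, p = C c := ⟨p.coeff 0, Polynomial.eq_C_of_natDegree_le_zero hp⟩
    rw [Polynomial.derivative_C]
    simp only [Polynomial.eval_zero, abs_zero]
    rw [ciSup_const]
    positivity
  rcases eq_or_lt_of_le hΦ0 with hΦeq | hΦpos
  · -- Φ = 0, p vanishes on the interval, so p = 0
    have hpz : p = 0 := by
      apply Polynomial.eq_zero_of_infinite_isRoot
      have hsub : Set.Icc (-1:ℝ) 1 ⊆ {x | p.IsRoot x} := by
        intro x hx
        have h1 := heval x hx
        rw [← hΦeq] at h1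
        have h2 := abs_nonneg (p.eval x)
        have hx0 : |p.eval x| = 0 := le_antisymm h1 h2
        simpa [Polynomial.IsRoot] using abs_eq_zero.mp hx0
      exact (Set.Icc_infinite (by norm_num : (-1:ℝ) < 1)).mono hsub
    subst hpz
    simp only [Polynomial.derivative_zero, Polynomial.eval_zero, abs_zero, ciSup_const]
    rw [← hΦeq, mul_zero]
  · -- main case
    set q : ℝ[X] := C Φ⁻¹ * p with hq
    have hΦinv : 0 < Φ⁻¹ := inv_pos.mpr hΦpos
    have hqdeg : q.natDegree ≤ M := by
      rw [hq]
      refine le_trans Polynomial.natDegree_mul_le ?_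
      rw [Polynomial.natDegree_C]
      omega
    have hqb : ∀ x ∈ Set.Icc (-1:ℝ) 1, |q.eval x| ≤ 1 := by
      intro x hx
      rw [hq]
      simp only [Polynomial.eval_mul, Polynomial.eval_C]
      rw [abs_mul, abs_of_pos hΦinv]
      rw [inv_mul_le_iff₀ hΦpos, mul_one]
      exact heval x hx
    have hqp := pointwise M hM1 q hqdeg hqb
    have hkey : ∀ x : ℝ, x ∈ Set.Icc (-1:ℝ) 1 → |p.derivative.eval x| ≤ (M:ℝ)^2 * Φ := by
      intro x hx
      have h1 := hqp x hx
      rw [hq, Polynomial.derivative_C_mul] at h1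
      simp only [Polynomial.eval_mul, Polynomial.eval_C] at h1
      rw [abs_mul, abs_of_pos hΦinv] at h1
      rw [inv_mul_le_iff₀ hΦpos] at h1
      linarith [h1]
    exact ciSup_le fun x => hkey x x.2
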